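/- Let C be an F_2F_4-additive code generated over F_2 by vectors V_1,…,V_l such that ⟨V_i,V_j⟩₄ ∈ {0, ω} for all i ≠ j and ⟨V_i,V_i⟩₄ ∉ {0, ω} for all i. Then C is an ACD code, i.e., C ∩ C^⊥ = {0}. -/

import Mathlib

abbrev F4 : Type := GaloisField 2 2

/-- The inner product `⟨u,v⟩₄ = ω·Σ aᵢcᵢ + Σ bⱼdⱼ` on `F_2^α × F_4^β`. -/
noncomputable def inner4 {α β : ℕ} (ω : F4)
    (u v : (Fin α → ZMod 2) × (Fin β → F4)) : F4 :=
  ω * ∑ i, algebraMap (ZMod 2) F4 (u.1 i * v.1 i) + ∑ j, u.2 j * v.2 j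

lemma inner4_zero_left {α β : ℕ} (ω : F4) (v : (Fin α → ZMod 2) × (Fin β → F4)) :
    inner4 ω 0 v = 0 := by
  simp [inner4]

lemma inner4_add_left {α β : ℕ} (ω : F4) (u u' v : (Fin α → ZMod 2) × (Fin β → F4)) :
    inner4 ω (u + u') v = inner4 ω u v + inner4 ω u' v := by
  simp only [inner4, Prod.fst_add, Prod.snd_add, Pi.add_apply, add_mul, map_add,
    Finset.sum_add_distrib, mul_add]
  ring

lemma zmod2_cases : ∀ c : ZMod 2, c = 0 ∨ c = 1 := by decide

lemma inner4_smul_left {α β : ℕ} (ω : F4) (c : ZMod 2)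
    (u v : (Fin α → ZMod 2) × (Fin β → F4)) :
    inner4 ω (c • u) v = c • inner4 ω u v := by
  rcases zmod2_cases c with h | h <;> subst h
  · simp [inner4_zero_left]
  · simp

lemma inner4_sum_left {α β : ℕ} (ω : F4) {ι : Type*} (s : Finset ι)
    (f : ι → (Fin α → ZMod 2) × (Fin β → F4)) (v : (Fin α → ZMod 2) × (Fin β → F4)) :
    inner4 ω (∑ i ∈ s, f i) v = ∑ i ∈ s, inner4 ω (f i) v := by
  classical
  induction s using Finset.induction with
  | empty => simp [inner4_zero_left]
  | insert _ _ hi ih => simp [Finset.sum_insert hi, inner4_add_left, ih]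

lemma F4_add_self (a : F4) : a + a = 0 := CharTwo.add_self_eq_zero a

/-- Case II: if `⟨Vᵢ,Vⱼ⟩₄ ∈ {0, ω}` for `i ≠ j` and `⟨Vᵢ,Vᵢ⟩₄ ∉ {0, ω}`, then the `F_2`-span `C` of the `Vᵢ` is an ACD code: `C ∩ C^⊥ = {0}`. -/
theorem stmt_9 (α β l : ℕ) (ω : F4) (hω : ω ^ 2 + ω + 1 = 0)
    (V : Fin l → (Fin α → ZMod 2) × (Fin β → F4))
    (hoff : ∀ i j, i ≠ j → inner4 ω (V i) (V j) ∈ ({0, ω} : Set F4))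
    (hdiag : ∀ i, inner4 ω (V i) (V i) ∉ ({0, ω} : Set F4)) :
    ∀ x ∈ Submodule.span (ZMod 2) (Set.range V),
      (∀ u ∈ Submodule.span (ZMod 2) (Set.range V), inner4 ω x u = 0) → x = 0 := by
  classical
  intro x hx h
  by_contra hx0
  obtain ⟨c, hc⟩ := (Submodule.mem_span_range_iff_exists_fun (ZMod 2)).mp hx
  have hj : ∃ j, c j = 1 := by
    by_contra hall
    push_neg at hall
    apply hx0
    rw [← hc]
    apply Finset.sum_eq_zero
    intro i _
    rcases zmod2_cases (c i) with h0 | h1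
    · simp [h0]
    · exact absurd h1 (hall i)
  obtain ⟨j, hj⟩ := hj
  have h0 : inner4 ω x (V j) = 0 :=
    h (V j) (Submodule.subset_span ⟨j, rfl⟩)
  rw [← hc, inner4_sum_left] at h0
  simp only [inner4_smul_left] at h0
  rw [← Finset.add_sum_erase _ _ (Finset.mem_univ j), hj, one_smul] at h0
  have hkey : inner4 ω (V j) (V j) = ∑ i ∈ Finset.univ.erase j, c i • inner4 ω (V i) (V j) := by
    have := congrArg (· + ∑ i ∈ Finset.univ.erase j, c i • inner4 ω (V i) (V j)) h0
    simp only [add_assoc, F4_add_self, add_zero, zero_add] at this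
    exact this
  apply hdiag j
  rw [hkey]
  apply Finset.sum_induction _ (fun z => z ∈ ({0, ω} : Set F4))
  · rintro a b (rfl | ha) (rfl | hb)
    · exact Or.inl (zero_add 0)
    · simp only [Set.mem_singleton_iff] at hb; subst hb; exact Or.inr (by rw [zero_add]; rfl)
    · simp only [Set.mem_singleton_iff] at ha; subst ha; exact Or.inr (by rw [add_zero]; rfl)
    · simp only [Set.mem_singleton_iff] at ha hb; subst ha; subst hb
      exact Or.inl (F4_add_self _)
  · exact Or.inl rfl
  · intro i hi
    rcases zmod2_cases (c i) with h0 | h1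
    · simp [h0]
    · rw [h1, one_smul]
      exact hoff i j (Finset.ne_of_mem_erase hi)
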